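/- Let A : ℝ^{n+1} → ℝ^{n+1} be a linear equivalence preserving the Minkowski product (⟨Ax, Ay⟩ = ⟨x, y⟩ for all x, y) and mapping Hⁿ into Hⁿ, i.e., A represents an isometry of hyperbolic n-space in the hyperboloid model. Then there exists a unique surjective isometry B of ℝⁿ (with the Euclidean metric) such that P₂(x, A x) = B(P₁(x, A x)) for all x ∈ Hⁿ. Moreover, this same B satisfies P₁(x, A⁻¹ x) = B(P₂(x, A⁻¹ x)) for all x ∈ Hⁿ, i.e., P₂(x, A⁻¹x) = B⁻¹(P₁(x, A⁻¹x)). -/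

import Mathlib

open scoped BigOperators

noncomputable section

/-- The Minkowski product on `ℝ^{n+1}`: `⟨x,y⟩ = -x₀y₀ + ∑_{i=1}^n xᵢyᵢ`. -/
def mink {n : ℕ} (x y : Fin (n + 1) → ℝ) : ℝ :=
  -(x 0 * y 0) + ∑ i : Fin n, x i.succ * y i.succ

/-- The vector `e = (1, 0, …, 0)` in `ℝ^{n+1}`. -/
def eVec (n : ℕ) : Fin (n + 1) → ℝ := fun i => if i = 0 then 1 else 0

/-- Projection `𝒫 : ℝ^{n+1} → ℝⁿ`, forgetting the 0-th coordinate, landing in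
Euclidean space (with the Euclidean norm). -/
def proj {n : ℕ} (x : Fin (n + 1) → ℝ) : EuclideanSpace ℝ (Fin n) :=
  WithLp.toLp 2 (fun i : Fin n => x i.succ)

/-- The hyperboloid model `Hⁿ = {x : ⟨x,x⟩ = -1, x₀ > 0}`. -/
def Hyp (n : ℕ) : Set (Fin (n + 1) → ℝ) := {x | mink x x = -1 ∧ 0 < x 0}

/-- First component of the Pogorelov map: `P₁(x,y) = 2𝒫(x)/(-⟨x+y,e⟩)`. -/
def P1 {n : ℕ} (x y : Fin (n + 1) → ℝ) : EuclideanSpace ℝ (Fin n) :=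
  (2 / (-(mink (x + y) (eVec n)))) • proj x

/-- Second component of the Pogorelov map: `P₂(x,y) = 2𝒫(y)/(-⟨x+y,e⟩)`. -/
def P2 {n : ℕ} (x y : Fin (n + 1) → ℝ) : EuclideanSpace ℝ (Fin n) :=
  (2 / (-(mink (x + y) (eVec n)))) • proj y

/-- The function `f(a,b) = (2+‖a‖+‖b‖)(2-‖a‖+‖b‖)(2+‖a‖-‖b‖)(2-‖a‖-‖b‖)`. -/
def fQ {n : ℕ} (a b : EuclideanSpace ℝ (Fin n)) : ℝ :=
  (2 + ‖a‖ + ‖b‖) * (2 - ‖a‖ + ‖b‖) * (2 + ‖a‖ - ‖b‖) * (2 - ‖a‖ - ‖b‖)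

/-- The vector in `ℝ^{n+1}` with 0-th coordinate `t` and `𝒫`-projection `v`. -/
def liftVec {n : ℕ} (t : ℝ) (v : EuclideanSpace ℝ (Fin n)) : Fin (n + 1) → ℝ :=
  Fin.cons t (fun i => v i)

/-- First component of `Ψ(a,b)`, namely `(√(‖x̂‖²+1), x̂)` with `x̂ = 4a/√f(a,b)`. -/
def Psi1 {n : ℕ} (a b : EuclideanSpace ℝ (Fin n)) : Fin (n + 1) → ℝ :=
  liftVec (Real.sqrt (‖(4 / Real.sqrt (fQ a b)) • a‖ ^ 2 + 1)) ((4 / Real.sqrt (fQ a b)) • a)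

/-- Second component of `Ψ(a,b)`, namely `(√(‖ŷ‖²+1), ŷ)` with `ŷ = 4b/√f(a,b)`. -/
def Psi2 {n : ℕ} (a b : EuclideanSpace ℝ (Fin n)) : Fin (n + 1) → ℝ :=
  liftVec (Real.sqrt (‖(4 / Real.sqrt (fQ a b)) • b‖ ^ 2 + 1)) ((4 / Real.sqrt (fQ a b)) • b)

/-! ### Auxiliary material for Statement 8 -/

open scoped RealInnerProductSpace

namespace Stmt8

variable {n : ℕ}

lemma liftVec_zero (t : ℝ) (u : EuclideanSpace ℝ (Fin n)) : liftVec t u 0 = t := rfl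

lemma proj_liftVec (t : ℝ) (u : EuclideanSpace ℝ (Fin n)) : proj (liftVec t u) = u := by
  ext i; simp [proj, liftVec]

lemma liftVec_add (u w : EuclideanSpace ℝ (Fin n)) :
    liftVec 0 (u + w) = liftVec 0 u + liftVec 0 w := by
  funext i; refine Fin.cases ?_ ?_ i <;> simp [liftVec]

lemma liftVec_smul (c : ℝ) (u : EuclideanSpace ℝ (Fin n)) :
    liftVec 0 (c • u) = c • liftVec 0 u := by
  funext i; refine Fin.cases ?_ ?_ i <;> simp [liftVec]

lemma proj_add (x y : Fin (n+1) → ℝ) : proj (x + y) = proj x + proj y := by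
  ext i; simp [proj]

lemma proj_smul (c : ℝ) (x : Fin (n+1) → ℝ) : proj (c • x) = c • proj x := by
  ext i; simp [proj]

lemma proj_neg (x : Fin (n+1) → ℝ) : proj (-x) = -proj x := by
  ext i; simp [proj]

lemma mink_expand' (x y : Fin (n + 1) → ℝ) :
    mink x y = -(x 0 * y 0) + ⟪proj x, proj y⟫ := by
  simp [mink, PiLp.inner_apply, RCLike.inner_apply, proj, mul_comm]

lemma proj_eVec' : proj (eVec n) = (0 : EuclideanSpace ℝ (Fin n)) := by
  ext i; simp [proj, eVec, Fin.succ_ne_zero]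

lemma eVec_zero' : eVec n 0 = (1:ℝ) := by simp [eVec]

lemma eVec_mem : eVec n ∈ Hyp n := by
  constructor
  · rw [mink_expand', proj_eVec', eVec_zero']; simp
  · rw [eVec_zero']; norm_num

lemma mink_add_eVec (x y : Fin (n + 1) → ℝ) :
    -(mink (x + y) (eVec n)) = x 0 + y 0 := by
  rw [mink_expand', proj_eVec', eVec_zero', inner_zero_right]
  simp

lemma decomp (x : Fin (n + 1) → ℝ) : x = x 0 • eVec n + liftVec 0 (proj x) := by
  funext i; refine Fin.cases ?_ ?_ i <;> simp [eVec, liftVec, proj, Fin.succ_ne_zero]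

variable (A : (Fin (n + 1) → ℝ) ≃ₗ[ℝ] (Fin (n + 1) → ℝ))

/-- the linear functional `u ↦ (A (0,u))₀`. -/
def phi : EuclideanSpace ℝ (Fin n) →ₗ[ℝ] ℝ where
  toFun u := A (liftVec 0 u) 0
  map_add' u w := by rw [liftVec_add, map_add]; rfl
  map_smul' c u := by rw [liftVec_smul, map_smul]; rfl

/-- the linear map `u ↦ 𝒫(A (0,u))`. -/
def Lm : EuclideanSpace ℝ (Fin n) →ₗ[ℝ] EuclideanSpace ℝ (Fin n) where
  toFun u := proj (A (liftVec 0 u))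
  map_add' u w := by rw [liftVec_add, map_add]; rfl
  map_smul' c u := by rw [liftVec_smul, map_smul]; rfl

lemma A_apply_zero (x : Fin (n+1) → ℝ) :
    A x 0 = A (eVec n) 0 * x 0 + phi A (proj x) := by
  conv_lhs => rw [decomp x, map_add, map_smul]
  simp [phi, mul_comm]

lemma proj_A_apply (x : Fin (n+1) → ℝ) :
    proj (A x) = x 0 • proj (A (eVec n)) + Lm A (proj x) := by
  conv_lhs => rw [decomp x, map_add, map_smul, proj_add, proj_smul]
  rfl

variable (hA : ∀ x y, mink (A x) (A y) = mink x y)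

include hA

lemma vv_eq : ⟪proj (A (eVec n)), proj (A (eVec n))⟫ = A (eVec n) 0 ^ 2 - 1 := by
  have h := hA (eVec n) (eVec n)
  rw [mink_expand', mink_expand' (eVec n), proj_eVec', eVec_zero',
    inner_zero_left] at h
  nlinarith [h]

lemma vL_eq (u : EuclideanSpace ℝ (Fin n)) :
    ⟪proj (A (eVec n)), Lm A u⟫ = A (eVec n) 0 * phi A u := by
  have h := hA (eVec n) (liftVec 0 u)
  rw [mink_expand', mink_expand' (eVec n), proj_eVec', eVec_zero',
    inner_zero_left, liftVec_zero] at h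
  have : ⟪proj (A (eVec n)), proj (A (liftVec 0 u))⟫ = A (eVec n) 0 * A (liftVec 0 u) 0 := by
    linarith
  simpa only [Lm, phi, LinearMap.coe_mk, AddHom.coe_mk] using this

lemma LL_eq (u w : EuclideanSpace ℝ (Fin n)) :
    ⟪Lm A u, Lm A w⟫ = ⟪u, w⟫ + phi A u * phi A w := by
  have h := hA (liftVec 0 u) (liftVec 0 w)
  rw [mink_expand', mink_expand' (liftVec 0 u), liftVec_zero, liftVec_zero,
    proj_liftVec, proj_liftVec] at h
  simp only [Lm, phi, LinearMap.coe_mk, AddHom.coe_mk]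
  nlinarith [h]

omit hA in
/-- Orthogonal part of the induced Euclidean motion. -/
def Rm : EuclideanSpace ℝ (Fin n) →ₗ[ℝ] EuclideanSpace ℝ (Fin n) :=
  Lm A - (1 / (1 + A (eVec n) 0)) • ((phi A).smulRight (proj (A (eVec n))))

omit hA in
lemma Rm_apply (u : EuclideanSpace ℝ (Fin n)) :
    Rm A u = Lm A u - ((phi A u) / (1 + A (eVec n) 0)) • proj (A (eVec n)) := by
  simp only [Rm, LinearMap.sub_apply, LinearMap.smul_apply, LinearMap.smulRight_apply,
    smul_smul]
  congr 2
  ring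

lemma Rm_inner (hα : (1:ℝ) + A (eVec n) 0 ≠ 0) (u w : EuclideanSpace ℝ (Fin n)) :
    ⟪Rm A u, Rm A w⟫ = ⟪u, w⟫ := by
  rw [Rm_apply, Rm_apply]
  rw [inner_sub_left]
  rw [inner_sub_right, inner_sub_right]
  rw [real_inner_smul_left, real_inner_smul_left, real_inner_smul_right,
    real_inner_smul_right]
  rw [LL_eq A hA, real_inner_comm (proj (A (eVec n))) (Lm A u), vL_eq A hA, vL_eq A hA,
    vv_eq A hA]
  field_simp
  ring

end Stmt8

/-- every hyperbolic isometry `A` (a Minkowski-product-preserving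
linear equivalence mapping `Hⁿ` into `Hⁿ`) determines a unique rigid motion `B`
of Euclidean `ℝⁿ` with `P₂(x, Ax) = B (P₁(x, Ax))` for all `x ∈ Hⁿ`; moreover
this same `B` satisfies `P₁(x, A⁻¹x) = B (P₂(x, A⁻¹x))` for all `x ∈ Hⁿ`. -/
theorem statement_8 {n : ℕ} (hn : 1 ≤ n)
    (A : (Fin (n + 1) → ℝ) ≃ₗ[ℝ] (Fin (n + 1) → ℝ))
    (hA : ∀ x y, mink (A x) (A y) = mink x y)
    (hH : ∀ x ∈ Hyp n, A x ∈ Hyp n) :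
    ∃ B : EuclideanSpace ℝ (Fin n) ≃ᵢ EuclideanSpace ℝ (Fin n),
      (∀ x ∈ Hyp n, P2 x (A x) = B (P1 x (A x))) ∧
      (∀ x ∈ Hyp n, P1 x (A.symm x) = B (P2 x (A.symm x))) ∧
      ∀ B' : EuclideanSpace ℝ (Fin n) ≃ᵢ EuclideanSpace ℝ (Fin n),
        (∀ x ∈ Hyp n, P2 x (A x) = B' (P1 x (A x))) → B' = B := by
  classical
  have heH : eVec n ∈ Hyp n := Stmt8.eVec_mem
  have hαpos : 0 < A (eVec n) 0 := (hH _ heH).2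
  have h1α : (1:ℝ) + A (eVec n) 0 ≠ 0 := ne_of_gt (by linarith)
  let REq : EuclideanSpace ℝ (Fin n) ≃ₗᵢ[ℝ] EuclideanSpace ℝ (Fin n) :=
    ((Stmt8.Rm A).isometryOfInner
      (fun u w => Stmt8.Rm_inner A hA h1α u w)).toLinearIsometryEquiv rfl
  let B : EuclideanSpace ℝ (Fin n) ≃ᵢ EuclideanSpace ℝ (Fin n) :=
    REq.toIsometryEquiv.trans
      (IsometryEquiv.addRight ((2 / (1 + A (eVec n) 0)) • proj (A (eVec n))))
  have hB : ∀ a, B a = Stmt8.Rm A a + (2 / (1 + A (eVec n) 0)) • proj (A (eVec n)) := by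
    intro a
    simp only [B, REq, IsometryEquiv.trans_apply, LinearIsometryEquiv.coe_toIsometryEquiv,
      LinearIsometry.coe_toLinearIsometryEquiv, LinearMap.coe_isometryOfInner,
      IsometryEquiv.addRight_apply]
  have hB0 : B 0 = (2 / (1 + A (eVec n) 0)) • proj (A (eVec n)) := by
    rw [hB]; simp
  have hmain : ∀ x ∈ Hyp n, P2 x (A x) = B (P1 x (A x)) := by
    intro x hx
    have hdpos : 0 < x 0 + A x 0 := add_pos hx.2 (hH x hx).2
    have hdne : x 0 + A x 0 ≠ 0 := ne_of_gt hdpos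
    have hdd : x 0 + A x 0 = (1 + A (eVec n) 0) * x 0 + Stmt8.phi A (proj x) := by
      rw [Stmt8.A_apply_zero A x]; ring
    simp only [P1, P2]
    rw [Stmt8.mink_add_eVec, hB, map_smul, Stmt8.Rm_apply, Stmt8.proj_A_apply A x]
    rw [hdd] at hdne ⊢
    match_scalars
    · field_simp
      ring
    · field_simp
  have hsymmH : ∀ x ∈ Hyp n, A.symm x ∈ Hyp n := by
    intro x hx
    have h1 : mink (A.symm x) (A.symm x) = -1 := by
      have h := hA (A.symm x) (A.symm x)
      rw [A.apply_symm_apply] at h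
      rw [← h]; exact hx.1
    refine ⟨h1, ?_⟩
    by_contra hle
    push_neg at hle
    have hsq : A.symm x 0 * A.symm x 0
        = 1 + ⟪proj (A.symm x), proj (A.symm x)⟫ := by
      have h2 := h1
      rw [Stmt8.mink_expand'] at h2
      linarith
    have hne : A.symm x 0 ≠ 0 := by
      intro h0
      rw [h0] at hsq
      have hnn : (0:ℝ) ≤ ⟪proj (A.symm x), proj (A.symm x)⟫ := real_inner_self_nonneg
      nlinarith [hnn]
    have hneg : A.symm x 0 < 0 := lt_of_le_of_ne hle hne
    have hzH : -(A.symm x) ∈ Hyp n := by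
      constructor
      · have hmm : mink (-(A.symm x)) (-(A.symm x)) = mink (A.symm x) (A.symm x) := by
          rw [Stmt8.mink_expand', Stmt8.mink_expand', Stmt8.proj_neg]
          simp
        rw [hmm, h1]
      · simp only [Pi.neg_apply]; linarith
    have h3 := (hH _ hzH).2
    rw [map_neg, A.apply_symm_apply] at h3
    simp only [Pi.neg_apply] at h3
    linarith [hx.2]
  have hpart2 : ∀ x ∈ Hyp n, P1 x (A.symm x) = B (P2 x (A.symm x)) := by
    intro x hx
    have hy := hsymmH x hx
    have h := hmain _ hy
    rw [A.apply_symm_apply] at h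
    have e1 : P1 x (A.symm x) = P2 (A.symm x) x := by
      simp only [P1, P2]; rw [add_comm x (A.symm x)]
    have e2 : P1 (A.symm x) x = P2 x (A.symm x) := by
      simp only [P1, P2]; rw [add_comm x (A.symm x)]
    rw [e1, h, e2]
  refine ⟨B, hmain, hpart2, ?_⟩
  intro B' hB'
  have hP10 : P1 (eVec n) (A (eVec n)) = 0 := by
    simp only [P1]; rw [Stmt8.proj_eVec']; simp
  have h0 : B' 0 = B 0 := by
    have h1 := hB' (eVec n) heH
    have h2 := hmain (eVec n) heH
    rw [hP10] at h1 h2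
    rw [← h1, ← h2]
  set g : EuclideanSpace ℝ (Fin n) ≃ᵢ EuclideanSpace ℝ (Fin n) :=
    B'.trans (IsometryEquiv.addRight (-(B' 0))) with hg
  have hg0 : g 0 = 0 := by simp [hg]
  set T := g.toRealLinearIsometryEquivOfMapZero hg0 with hTdef
  have hT : ∀ a, T a = B' a - B' 0 := by
    intro a
    have hcoe := IsometryEquiv.coe_toRealLinearIsometryEquivOfMapZero g hg0
    calc T a = g a := congrFun hcoe a
      _ = B' a - B' 0 := by simp [hg, sub_eq_add_neg]
  have hagree : ∀ i : Fin n,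
      T (EuclideanSpace.single i (1:ℝ)) = Stmt8.Rm A (EuclideanSpace.single i (1:ℝ)) := by
    intro i
    set xi := liftVec (Real.sqrt 2) (EuclideanSpace.single i (1:ℝ)) with hxi
    have hxiH : xi ∈ Hyp n := by
      constructor
      · rw [hxi, Stmt8.mink_expand', Stmt8.liftVec_zero, Stmt8.proj_liftVec,
          EuclideanSpace.inner_single_left]
        simp [EuclideanSpace.single_apply, Real.mul_self_sqrt]
        norm_num
      · rw [hxi, Stmt8.liftVec_zero]; positivity
    have hd : 0 < xi 0 + A xi 0 := add_pos hxiH.2 (hH _ hxiH).2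
    have hc : (2 : ℝ) / (xi 0 + A xi 0) ≠ 0 :=
      div_ne_zero two_ne_zero (ne_of_gt hd)
    have hP1 : P1 xi (A xi) = (2 / (xi 0 + A xi 0)) • (EuclideanSpace.single i (1:ℝ)) := by
      simp only [P1]
      rw [Stmt8.mink_add_eVec, hxi, Stmt8.proj_liftVec]
    have hBs : B' (P1 xi (A xi)) = B (P1 xi (A xi)) := by
      rw [← hB' xi hxiH, ← hmain xi hxiH]
    have hTs : T (P1 xi (A xi)) = Stmt8.Rm A (P1 xi (A xi)) := by
      rw [hT, hBs, h0, hB, hB0]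
      abel
    rw [hP1, map_smul, map_smul] at hTs
    exact smul_right_injective _ hc hTs
  have hTR : ∀ a, T a = Stmt8.Rm A a := by
    intro a
    have hext : (T.toLinearIsometry.toLinearMap) = Stmt8.Rm A := by
      apply Module.Basis.ext (EuclideanSpace.basisFun (Fin n) ℝ).toBasis
      intro i
      rw [OrthonormalBasis.coe_toBasis, EuclideanSpace.basisFun_apply]
      exact hagree i
    calc T a = T.toLinearIsometry.toLinearMap a := rfl
      _ = Stmt8.Rm A a := by rw [hext]
  apply IsometryEquiv.ext
  intro a
  have hsplit : B' a = T a + B' 0 := by rw [hT a]; abel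
  rw [hsplit, hTR, h0, hB0, hB a]
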